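/- arXiv:1704.09013 — 5 statements merged into one kernel-verified Lean document; each statement's English description precedes it below -/
import Mathlib

section
/- The twisted Burnside–Frobenius theorem holds for finite groups: for any endomorphism φ of a finite group G, the Reidemeister number R(φ) equals the number of equivalence classes [ρ] of irreducible complex representations of G such that ρ∘φ is equivalent to ρ. -/
def twistedConj {G : Type*} [Group G] (φ : G →* G) (a b : G) : Prop :=
  ∃ x : G, a = x * b * (φ x)⁻¹

def RepIsIrreducible {G : Type*} [Group G] {V : Type*} [AddCommGroup V] [Module ℂ V]
    (ρ : Representation ℂ G V) : Prop :=
  Nontrivial V ∧ ∀ p : Submodule ℂ V, (∀ g : G, ∀ v ∈ p, ρ g v ∈ p) → p = ⊥ ∨ p = ⊤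

/-- A bundled irreducible finite-dimensional complex representation of `G`. -/
structure IrrFRep (G : Type) [Group G] where
  V : Type
  [addGrp : AddCommGroup V]
  [mod : Module ℂ V]
  [fd : FiniteDimensional ℂ V]
  ρ : Representation ℂ G V
  irr : RepIsIrreducible ρ

attribute [instance] IrrFRep.addGrp IrrFRep.mod IrrFRep.fd

/-- Equivalence of representations. -/
def repEquivRel {G : Type} [Group G] (X Y : IrrFRep G) : Prop :=
  ∃ T : X.V ≃ₗ[ℂ] Y.V, ∀ (g : G) (v : X.V), T (X.ρ g v) = Y.ρ g (T v)

namespace TBF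

open TensorProduct
open scoped Classical

open Representation LinearMap Module

variable {G : Type} [Group G]

section basic

variable {V W : Type} [AddCommGroup V] [Module ℂ V] [AddCommGroup W] [Module ℂ W]

lemma rep_inv_apply (σ : Representation ℂ G W) (g : G) (w : W) : σ g⁻¹ (σ g w) = w := by
  have : σ g⁻¹ (σ g w) = (σ g⁻¹ * σ g) w := rfl
  rw [this, ← map_mul, inv_mul_cancel, map_one]; rfl

lemma rep_inv_apply' (σ : Representation ℂ G W) (g : G) (w : W) : σ g (σ g⁻¹ w) = w := by
  simpa using rep_inv_apply σ g⁻¹ w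

lemma mem_itw {σ : Representation ℂ G W} {ρ : Representation ℂ G V} {f : W →ₗ[ℂ] V} :
    f ∈ invariants (linHom σ ρ) ↔ ∀ g w, f (σ g w) = ρ g (f w) := by
  rw [mem_invariants]
  constructor
  · intro h g w
    have h1 := h g
    rw [linHom_apply] at h1
    conv_lhs => rw [← h1]
    simp only [LinearMap.comp_apply]
    rw [rep_inv_apply]
  · intro h g
    rw [linHom_apply]
    ext w
    simp only [LinearMap.comp_apply]
    rw [← h g (σ g⁻¹ w), rep_inv_apply']

lemma schur_range {ρ : Representation ℂ G V} (hρ : RepIsIrreducible ρ)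
    {σ : Representation ℂ G W} {f : W →ₗ[ℂ] V}
    (hf : ∀ g w, f (σ g w) = ρ g (f w)) (h0 : f ≠ 0) : LinearMap.range f = ⊤ := by
  rcases hρ.2 (LinearMap.range f) (by
    rintro g v ⟨w, rfl⟩
    exact ⟨σ g w, hf g w⟩) with h | h
  · exact absurd (LinearMap.range_eq_bot.mp h) h0
  · exact h

lemma schur_ker {σ : Representation ℂ G W} (hσ : RepIsIrreducible σ)
    {ρ : Representation ℂ G V} {f : W →ₗ[ℂ] V}
    (hf : ∀ g w, f (σ g w) = ρ g (f w)) (h0 : f ≠ 0) : LinearMap.ker f = ⊥ := by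
  rcases hσ.2 (LinearMap.ker f) (by
    intro g w hw
    rw [LinearMap.mem_ker] at hw ⊢
    rw [hf g w, hw, map_zero]) with h | h
  · exact h
  · exact absurd (LinearMap.ker_eq_top.mp h) h0

lemma schur_scalar [FiniteDimensional ℂ V] {ρ : Representation ℂ G V}
    (hρ : RepIsIrreducible ρ) (f : V →ₗ[ℂ] V)
    (hf : ∀ g v, f (ρ g v) = ρ g (f v)) : ∃ c : ℂ, f = c • LinearMap.id := by
  haveI : Nontrivial V := hρ.1
  obtain ⟨c, hc⟩ := Module.End.exists_eigenvalue f
  obtain ⟨v, hv⟩ := hc.exists_hasEigenvector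
  have v0 := hv.right
  refine ⟨c, ?_⟩
  set g : V →ₗ[ℂ] V := f - c • LinearMap.id with hg
  have hgint : ∀ x v, g (ρ x v) = ρ x (g v) := by
    intro x v
    simp only [hg, LinearMap.sub_apply, LinearMap.smul_apply, LinearMap.id_apply, hf, map_sub,
      map_smul]
  have hker : LinearMap.ker g ≠ ⊥ := by
    intro h
    have : g v = 0 := by
      simp only [hg, LinearMap.sub_apply, LinearMap.smul_apply, LinearMap.id_apply]
      rw [hv.apply_eq_smul, sub_self]

    rw [← LinearMap.mem_ker, h, Submodule.mem_bot] at this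
    exact v0 this
  rcases hρ.2 (LinearMap.ker g) (by
    intro x w hw
    rw [LinearMap.mem_ker] at hw ⊢
    rw [hgint x w, hw, map_zero]) with h | h
  · exact absurd h hker
  · have : g = 0 := LinearMap.ker_eq_top.mp h
    have := sub_eq_zero.mp this
    exact this

end basic


section traces
variable {G : Type} [Group G]
variable {V W : Type} [AddCommGroup V] [Module ℂ V] [AddCommGroup W] [Module ℂ W]
variable [FiniteDimensional ℂ V] [FiniteDimensional ℂ W]

lemma trace_linHom_apply (σ : Representation ℂ G W) (ρ : Representation ℂ G V) (g : G) :
    LinearMap.trace ℂ _ (linHom σ ρ g) =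
      LinearMap.trace ℂ W (σ g⁻¹) * LinearMap.trace ℂ V (ρ g) := by
  have hcomm := Representation.dualTensorHom_comm σ ρ g
  have heq : linHom σ ρ g =
      (dualTensorHomEquiv ℂ W V).conj (TensorProduct.map (σ.dual g) (ρ g)) := by
    rw [LinearEquiv.conj_apply]
    rw [show ((dualTensorHomEquiv ℂ W V) : Module.Dual ℂ W ⊗[ℂ] V →ₗ[ℂ] (W →ₗ[ℂ] V)) =
      dualTensorHom ℂ W V from rfl]
    rw [hcomm, LinearMap.comp_assoc]
    ext x
    simp [show ∀ y, (dualTensorHomEquiv ℂ W V).symm y = ((dualTensorHomEquivOfBasis (Module.Free.chooseBasis ℂ W)).symm y) from fun _ => by rw [dualTensorHomEquiv_eq_dualTensorHomEquivOfBasis (Module.Free.chooseBasis ℂ W)]]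
  rw [heq, LinearMap.trace_conj', LinearMap.trace_tensorProduct', Representation.dual_apply,
    LinearMap.trace_transpose']

variable [Fintype G]

lemma sum_trace_eq (U : Type) [AddCommGroup U] [Module ℂ U] [FiniteDimensional ℂ U]
    (τ : Representation ℂ G U) :
    ∑ g : G, LinearMap.trace ℂ U (τ g) =
      (Fintype.card G : ℂ) * (finrank ℂ (invariants τ) : ℂ) := by
  have hcard : (Fintype.card G : ℂ) ≠ 0 := Nat.cast_ne_zero.mpr Fintype.card_ne_zero
  haveI : Invertible (Fintype.card G : ℂ) := invertibleOfNonzero hcard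
  have h := (Representation.isProj_averageMap τ).trace
  have h2 : LinearMap.trace ℂ U (averageMap τ) =
      ⅟ (Fintype.card G : ℂ) * ∑ g : G, LinearMap.trace ℂ U (τ g) := by
    rw [averageMap, GroupAlgebra.average, map_smul, map_smul, map_sum, map_sum]
    simp only [smul_eq_mul]
    congr 1
    apply Finset.sum_congr rfl
    intro g _
    rw [Representation.asAlgebraHom_of]
  calc ∑ g : G, LinearMap.trace ℂ U (τ g)
      = (Fintype.card G : ℂ) * (⅟ (Fintype.card G : ℂ) * ∑ g : G, LinearMap.trace ℂ U (τ g)) := by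
        rw [← mul_assoc, mul_invOf_self, one_mul]
    _ = (Fintype.card G : ℂ) * (finrank ℂ (invariants τ) : ℂ) := by rw [← h2, h]


end traces

section dims

variable {V W : Type} [AddCommGroup V] [Module ℂ V] [AddCommGroup W] [Module ℂ W]
variable [FiniteDimensional ℂ V] [FiniteDimensional ℂ W]

lemma itw_dim_self {ρ : Representation ℂ G V} (hρ : RepIsIrreducible ρ) :
    finrank ℂ (invariants (linHom ρ ρ)) = 1 := by
  haveI : Nontrivial V := hρ.1
  have hid : (LinearMap.id : V →ₗ[ℂ] V) ≠ 0 := by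
    obtain ⟨v, w, hvw⟩ := exists_pair_ne V
    intro h
    rcases eq_or_ne v 0 with rfl | hv
    · have := LinearMap.ext_iff.mp h w
      simp at this
      exact hvw this.symm
    · have := LinearMap.ext_iff.mp h v
      simp at this
      exact hv this
  have heq : invariants (linHom ρ ρ) = (ℂ ∙ (LinearMap.id : V →ₗ[ℂ] V)) := by
    apply le_antisymm
    · intro f hf
      obtain ⟨c, rfl⟩ := schur_scalar hρ f (fun g v => mem_itw.mp hf g v)
      exact Submodule.smul_mem _ c (Submodule.mem_span_singleton_self _)
    · rw [Submodule.span_singleton_le_iff_mem]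
      exact mem_itw.mpr (fun g v => rfl)
  rw [heq, finrank_span_singleton hid]

lemma itw_dim (σ : Representation ℂ G W) (ρ : Representation ℂ G V) (hρ : RepIsIrreducible ρ)
    (hinj : ∀ f : W →ₗ[ℂ] V, (∀ g w, f (σ g w) = ρ g (f w)) → Function.Surjective f →
      Function.Injective f) :
    finrank ℂ (invariants (linHom σ ρ)) =
      if ∃ T : W ≃ₗ[ℂ] V, ∀ (g : G) (w : W), T (σ g w) = ρ g (T w) then 1 else 0 := by
  split_ifs with h
  · obtain ⟨T₀, hT₀⟩ := h
    have hsy : ∀ (g : G) (v : V), T₀.symm (ρ g v) = σ g (T₀.symm v) := by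
      intro g v
      apply T₀.injective
      rw [T₀.apply_symm_apply, hT₀, T₀.apply_symm_apply]
    set e := LinearEquiv.arrowCongr (σ₁₁' := RingHom.id ℂ) (σ₂₂' := RingHom.id ℂ) T₀ (LinearEquiv.refl ℂ V) with he
    have hmap : Submodule.map (e : (W →ₗ[ℂ] V) →ₗ[ℂ] (V →ₗ[ℂ] V)) (invariants (linHom σ ρ)) =
        invariants (linHom ρ ρ) := by
      ext f
      rw [Submodule.mem_map]
      constructor
      · rintro ⟨y, hy, rfl⟩
        refine mem_itw.mpr (fun g v => ?_)
        have h1 : ∀ v, (e : (W →ₗ[ℂ] V) →ₗ[ℂ] (V →ₗ[ℂ] V)) y v = y (T₀.symm v) := fun v => rfl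
        rw [h1, h1, hsy, mem_itw.mp hy]
      · intro hf
        refine ⟨e.symm f, ?_, by simp⟩
        refine mem_itw.mpr (fun g w => ?_)
        have h1 : ∀ w, (e.symm f) w = f (T₀ w) := fun w => rfl
        rw [h1, h1, hT₀, mem_itw.mp hf]
    rw [← itw_dim_self (G := G) hρ, ← hmap, LinearEquiv.finrank_map_eq]
  · have hbot : invariants (linHom σ ρ) = ⊥ := by
      rw [Submodule.eq_bot_iff]
      intro f hf
      by_contra h0
      have hint := fun g w => mem_itw.mp hf g w
      have hsurj : Function.Surjective f :=
        LinearMap.range_eq_top.mp (schur_range hρ hint h0)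
      have hbij : Function.Bijective f := ⟨hinj f hint hsurj, hsurj⟩
      exact h ⟨LinearEquiv.ofBijective f hbij, fun g w => hint g w⟩
    rw [hbot, finrank_bot]

end dims

noncomputable def irrChar (X : IrrFRep G) : G → ℂ := fun g => LinearMap.trace ℂ X.V (X.ρ g)

section chars

variable [Fintype G]

lemma char_pair (X Y : IrrFRep G) :
    ∑ g : G, irrChar Y g⁻¹ * irrChar X g =
      (Fintype.card G : ℂ) * (if repEquivRel Y X then 1 else 0) := by
  have h1 := sum_trace_eq (Y.V →ₗ[ℂ] X.V) (linHom Y.ρ X.ρ)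
  have h2 : ∀ g : G, LinearMap.trace ℂ _ (linHom Y.ρ X.ρ g) = irrChar Y g⁻¹ * irrChar X g :=
    fun g => trace_linHom_apply Y.ρ X.ρ g
  rw [Finset.sum_congr rfl (fun g _ => h2 g)] at h1
  rw [h1]
  congr 1
  have hinj : ∀ f : Y.V →ₗ[ℂ] X.V, (∀ g w, f (Y.ρ g w) = X.ρ g (f w)) →
      Function.Surjective f → Function.Injective f := by
    intro f hint hsurj
    haveI : Nontrivial X.V := X.irr.1
    have h0 : f ≠ 0 := by
      intro h
      obtain ⟨v, hv⟩ := exists_ne (0 : X.V)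
      obtain ⟨w, rfl⟩ := hsurj v
      rw [h] at hv
      simp at hv
    exact LinearMap.ker_eq_bot.mp (schur_ker Y.irr hint h0)
  rw [itw_dim Y.ρ X.ρ X.irr hinj]
  rw [show (∃ T : Y.V ≃ₗ[ℂ] X.V, ∀ (g : G) (w : Y.V), T (Y.ρ g w) = X.ρ g (T w)) =
    repEquivRel Y X from rfl]
  split_ifs <;> simp

lemma char_twisted (φ : G →* G) (X : IrrFRep G) :
    ∑ g : G, irrChar X (φ g⁻¹) * irrChar X g =
      (Fintype.card G : ℂ) *
        (if ∃ T : X.V ≃ₗ[ℂ] X.V, ∀ (g : G) (v : X.V), T (X.ρ (φ g) v) = X.ρ g (T v)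
          then 1 else 0) := by
  have h1 := sum_trace_eq (X.V →ₗ[ℂ] X.V) (linHom (X.ρ.comp φ) X.ρ)
  have h2 : ∀ g : G, LinearMap.trace ℂ _ (linHom (X.ρ.comp φ) X.ρ g) =
      irrChar X (φ g⁻¹) * irrChar X g := by
    intro g
    have := trace_linHom_apply (X.ρ.comp φ) X.ρ g
    rw [this]
    rfl
  rw [Finset.sum_congr rfl (fun g _ => h2 g)] at h1
  rw [h1]
  congr 1
  have hinj : ∀ f : X.V →ₗ[ℂ] X.V, (∀ g w, f ((X.ρ.comp φ) g w) = X.ρ g (f w)) →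
      Function.Surjective f → Function.Injective f := fun f _ hs =>
    LinearMap.injective_iff_surjective.mpr hs
  rw [itw_dim (X.ρ.comp φ) X.ρ X.irr hinj]
  have hAB : (∃ T : X.V ≃ₗ[ℂ] X.V, ∀ (g : G) (w : X.V), T ((X.ρ.comp φ) g w) = X.ρ g (T w)) =
      (∃ T : X.V ≃ₗ[ℂ] X.V, ∀ (g : G) (v : X.V), T (X.ρ (φ g) v) = X.ρ g (T v)) := rfl
  rw [hAB]
  split_ifs <;> simp

end chars

section classes

lemma repEquivRel_equivalence : Equivalence (repEquivRel (G := G)) := by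
  constructor
  · intro X
    exact ⟨LinearEquiv.refl ℂ X.V, fun g v => rfl⟩
  · rintro X Y ⟨T, hT⟩
    refine ⟨T.symm, fun g v => ?_⟩
    apply T.injective
    rw [T.apply_symm_apply, hT, T.apply_symm_apply]
  · rintro X Y Z ⟨T, hT⟩ ⟨S, hS⟩
    exact ⟨T.trans S, fun g v => by
      simp only [LinearEquiv.trans_apply, hT, hS]⟩

lemma irrChar_equiv {X Y : IrrFRep G} (h : repEquivRel X Y) : irrChar X = irrChar Y := by
  obtain ⟨T, hT⟩ := h
  funext g
  unfold irrChar
  have : Y.ρ g = T.conj (X.ρ g) := by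
    ext v
    rw [LinearEquiv.conj_apply]
    simp only [LinearMap.comp_apply, LinearEquiv.coe_coe, hT, T.apply_symm_apply]
  rw [this, LinearMap.trace_conj']

lemma irrChar_conjCl (X : IrrFRep G) (h g : G) : irrChar X (h * g * h⁻¹) = irrChar X g := by
  unfold irrChar
  rw [show (h * g * h⁻¹ : G) = (h * g) * h⁻¹ from rfl, map_mul, LinearMap.trace_mul_comm,
    ← map_mul, inv_mul_cancel_left]

variable (G) in
/-- The type of equivalence classes of irreducible representations. -/
abbrev Qcl := Quot (repEquivRel (G := G))

noncomputable def cchar : Qcl G → G → ℂ :=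
  Quot.lift irrChar (fun _ _ h => irrChar_equiv h)

lemma quot_mk_eq_iff {X Y : IrrFRep G} :
    Quot.mk (repEquivRel (G := G)) X = Quot.mk _ Y ↔ repEquivRel X Y := by
  rw [Quot.eq]
  exact (repEquivRel_equivalence (G := G)).eqvGen_iff

lemma cchar_conjCl (c : Qcl G) (h g : G) : cchar c (h * g * h⁻¹) = cchar c g := by
  induction c using Quot.ind with
  | _ X => exact irrChar_conjCl X h g

variable [Fintype G]

lemma cchar_pair (c d : Qcl G) :
    ∑ g : G, cchar d g⁻¹ * cchar c g = (Fintype.card G : ℂ) * (if c = d then 1 else 0) := by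
  induction c using Quot.ind with
  | _ X =>
  induction d using Quot.ind with
  | _ Y =>
  have h := char_pair (G := G) X Y
  rw [show cchar (Quot.mk _ X) = irrChar X from rfl, show cchar (Quot.mk _ Y) = irrChar Y from rfl]
  rw [h]
  congr 1
  have : (Quot.mk (repEquivRel (G := G)) X = Quot.mk _ Y) ↔ repEquivRel Y X := by
    rw [quot_mk_eq_iff]
    exact ⟨fun h => (repEquivRel_equivalence (G := G)).symm h,
      fun h => (repEquivRel_equivalence (G := G)).symm h⟩
  rw [show (Quot.mk (repEquivRel (G := G)) X = Quot.mk _ Y) = repEquivRel Y X from propext this]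

lemma card_ne_zero_C : (Fintype.card G : ℂ) ≠ 0 := Nat.cast_ne_zero.mpr Fintype.card_ne_zero

lemma cchar_injective : Function.Injective (cchar : Qcl G → G → ℂ) := by
  intro c d h
  by_contra hne
  have h1 := cchar_pair (G := G) c d
  rw [h, if_neg hne, mul_zero] at h1
  have h2 := cchar_pair (G := G) d d
  rw [if_pos rfl, mul_one] at h2
  rw [h1] at h2
  exact card_ne_zero_C (G := G) h2.symm

lemma cchar_linearIndependent : LinearIndependent ℂ (cchar : Qcl G → G → ℂ) := by
  rw [linearIndependent_iff]
  intro l hl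
  ext d
  simp only [Finsupp.coe_zero, Pi.zero_apply]
  have h0 : ∀ g : G, (Finsupp.linearCombination ℂ (cchar : Qcl G → G → ℂ) l) g = 0 := by
    intro g; rw [hl]; rfl
  have key : ∑ g : G, cchar d g⁻¹ *
      (Finsupp.linearCombination ℂ (cchar : Qcl G → G → ℂ) l) g
      = (Fintype.card G : ℂ) * l d := by
    have expand : ∀ g : G, (Finsupp.linearCombination ℂ (cchar : Qcl G → G → ℂ) l) g =
        ∑ c ∈ l.support, l c * cchar c g := by
      intro g
      rw [Finsupp.linearCombination_apply, Finsupp.sum, Finset.sum_apply]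
      apply Finset.sum_congr rfl; intro c _
      simp
    calc ∑ g : G, cchar d g⁻¹ * (Finsupp.linearCombination ℂ (cchar : Qcl G → G → ℂ) l) g
        = ∑ g : G, ∑ c ∈ l.support, l c * (cchar d g⁻¹ * cchar c g) := by
          apply Finset.sum_congr rfl; intro g _
          rw [expand g, Finset.mul_sum]
          apply Finset.sum_congr rfl; intro c _; ring
      _ = ∑ c ∈ l.support, l c * ∑ g : G, cchar d g⁻¹ * cchar c g := by
          rw [Finset.sum_comm]
          apply Finset.sum_congr rfl; intro c _
          rw [Finset.mul_sum]
      _ = ∑ c ∈ l.support, l c * ((Fintype.card G : ℂ) * (if c = d then 1 else 0)) := by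
          apply Finset.sum_congr rfl; intro c _
          rw [cchar_pair]
      _ = (Fintype.card G : ℂ) * l d := by
          simp only [mul_ite, mul_one, mul_zero]
          rw [Finset.sum_ite_eq' l.support d (fun c => l c * (Fintype.card G : ℂ))]
          by_cases hd : d ∈ l.support
          · rw [if_pos hd, mul_comm]
          · rw [if_neg hd, Finsupp.notMem_support_iff.mp hd, mul_zero]
  rw [Finset.sum_congr rfl (fun g _ => by rw [h0 g, mul_zero])] at key
  rw [Finset.sum_const_zero] at key
  have := key.symm
  rcases mul_eq_zero.mp this with h | h
  · exact absurd h (card_ne_zero_C (G := G))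
  · exact h

instance : Finite (Qcl G) :=
  (cchar_linearIndependent (G := G)).finite

end classes

section completeness

variable [Fintype G]

lemma Tf_intertwine (X : IrrFRep G) (f : G → ℂ) (hcls : ∀ h g : G, f (h * g * h⁻¹) = f g)
    (h : G) (v : X.V) :
    (∑ g : G, f g • X.ρ g) (X.ρ h v) = X.ρ h ((∑ g : G, f g • X.ρ g) v) := by
  have lhs : (∑ g : G, f g • X.ρ g) (X.ρ h v) = ∑ g : G, f g • X.ρ (g * h) v := by
    rw [LinearMap.sum_apply]
    apply Finset.sum_congr rfl
    intro g _
    rw [LinearMap.smul_apply, map_mul]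
    rfl
  have rhs : X.ρ h ((∑ g : G, f g • X.ρ g) v) = ∑ g : G, f g • X.ρ (h * g) v := by
    rw [LinearMap.sum_apply, map_sum]
    apply Finset.sum_congr rfl
    intro g _
    rw [LinearMap.smul_apply, map_smul, map_mul]
    rfl
  rw [lhs, rhs]
  apply Fintype.sum_bijective (fun g => h⁻¹ * g * h)
    ((Equiv.mulLeft h⁻¹).trans (Equiv.mulRight h)).bijective
  intro g
  show f g • X.ρ (g * h) v = f (h⁻¹ * g * h) • X.ρ (h * (h⁻¹ * g * h)) v
  have h1 : f (h⁻¹ * g * h) = f g := by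
    have := hcls h⁻¹ g
    simpa using this
  have h2 : h * (h⁻¹ * g * h) = g * h := by group
  rw [h1, h2]

lemma Tf_zero (X : IrrFRep G) (f : G → ℂ) (hcls : ∀ h g : G, f (h * g * h⁻¹) = f g)
    (h0 : ∑ g : G, f g * irrChar X g = 0) :
    (∑ g : G, f g • X.ρ g : X.V →ₗ[ℂ] X.V) = 0 := by
  obtain ⟨c, hc⟩ := schur_scalar X.irr (∑ g : G, f g • X.ρ g)
    (fun h v => Tf_intertwine X f hcls h v)
  haveI : Nontrivial X.V := X.irr.1
  have htr : LinearMap.trace ℂ X.V (∑ g : G, f g • X.ρ g) = 0 := by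
    rw [map_sum]
    rw [← h0]
    apply Finset.sum_congr rfl
    intro g _
    rw [map_smul, smul_eq_mul]
    rfl
  rw [hc, map_smul, LinearMap.trace_id, smul_eq_mul] at htr
  have hfr : ((finrank ℂ X.V : ℂ)) ≠ 0 := by
    exact_mod_cast Nat.cast_ne_zero.mpr Module.finrank_pos.ne'
  have hc0 : c = 0 := by
    rcases mul_eq_zero.mp htr with h | h
    · exact h
    · exact absurd h hfr
  rw [hc, hc0, zero_smul]

instance : FiniteDimensional ℂ (MonoidAlgebra ℂ G) :=
  Module.Finite.equiv ((MonoidAlgebra.coeffLinearEquiv ℂ).trans (Finsupp.linearEquivFunOnFinite ℂ ℂ G)).symm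

/-- The representation of `G` on a submodule of the group algebra. -/
noncomputable def subRep (W : Submodule (MonoidAlgebra ℂ G) (MonoidAlgebra ℂ G)) :
    Representation ℂ G ↥(W.restrictScalars ℂ) where
  toFun g :=
    { toFun := fun w => ⟨MonoidAlgebra.of ℂ G g * (w : MonoidAlgebra ℂ G), by
        have : (w : MonoidAlgebra ℂ G) ∈ W := w.2
        simpa [smul_eq_mul] using W.smul_mem (MonoidAlgebra.of ℂ G g) this⟩
      map_add' := fun x y => by ext; simp [mul_add]
      map_smul' := fun c x => by ext; simp [mul_smul_comm] }
  map_one' := by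
    ext w
    simp
  map_mul' g h := by
    ext w
    simp [mul_assoc]

lemma subRep_irr (W : Submodule (MonoidAlgebra ℂ G) (MonoidAlgebra ℂ G))
    (hW : IsSimpleModule (MonoidAlgebra ℂ G) ↥W) : RepIsIrreducible (subRep W) := by
  constructor
  · haveI := hW.nontrivial
    obtain ⟨⟨x, hx⟩, ⟨y, hy⟩, hxy⟩ := exists_pair_ne ↥W
    refine ⟨⟨x, hx⟩, ⟨y, hy⟩, fun h => hxy ?_⟩
    apply Subtype.ext
    exact congrArg Subtype.val h
  · intro p hp
    set p' : Submodule ℂ (MonoidAlgebra ℂ G) := p.map (W.restrictScalars ℂ).subtype with hp'def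
    have hclosed : ∀ a : MonoidAlgebra ℂ G, ∀ x ∈ p', a * x ∈ p' := by
      intro a
      induction a using MonoidAlgebra.induction_on with
      | of g =>
        rintro x ⟨⟨x, hxW⟩, hxp, rfl⟩
        exact ⟨subRep W g ⟨x, hxW⟩, hp g _ hxp, rfl⟩
      | add f₁ f₂ h1 h2 =>
        intro x hx
        rw [add_mul]
        exact p'.add_mem (h1 x hx) (h2 x hx)
      | smul c a h =>
        intro x hx
        rw [smul_mul_assoc]
        exact p'.smul_mem c (h x hx)
    set P : Submodule (MonoidAlgebra ℂ G) (MonoidAlgebra ℂ G) :=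
      { carrier := ↑p'
        add_mem' := fun ha hb => p'.add_mem ha hb
        zero_mem' := p'.zero_mem
        smul_mem' := fun a x hx => by
          rw [smul_eq_mul]
          exact hclosed a x hx } with hPdef
    have hPW : P ≤ W := by
      rintro x ⟨⟨y, hyW⟩, _, rfl⟩
      exact hyW
    have hatom := isSimpleModule_iff_isAtom.mp hW
    rcases hatom.le_iff.mp hPW with hbot | htop
    · left
      rw [Submodule.eq_bot_iff]
      intro x hxp
      have : (x : MonoidAlgebra ℂ G) ∈ P := ⟨x, hxp, rfl⟩
      rw [hbot, Submodule.mem_bot] at this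
      exact Subtype.ext this
    · right
      rw [Submodule.eq_top_iff']
      intro w
      have hw : (w : MonoidAlgebra ℂ G) ∈ P := by
        rw [htop]
        exact w.2
      obtain ⟨y, hyp, hval⟩ := hw
      have : y = w := Subtype.ext hval
      rwa [this] at hyp

/-- Completeness: a class function orthogonal to all irreducible characters vanishes. -/
lemma class_fn_orth (f : G → ℂ) (hcls : ∀ h g : G, f (h * g * h⁻¹) = f g)
    (horth : ∀ X : IrrFRep G, ∑ g : G, f g * irrChar X g = 0) : f = 0 := by
  haveI : NeZero ((Fintype.card G : ℂ)) := ⟨card_ne_zero_C (G := G)⟩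
  set u : MonoidAlgebra ℂ G := ∑ g : G, f g • MonoidAlgebra.of ℂ G g with hu
  have hsimple : ∀ W : Submodule (MonoidAlgebra ℂ G) (MonoidAlgebra ℂ G),
      IsSimpleModule (MonoidAlgebra ℂ G) ↥W → ∀ w ∈ W, u * w = 0 := by
    intro W hW w hw
    set X : IrrFRep G := { V := ↥(W.restrictScalars ℂ), ρ := subRep W, irr := subRep_irr W hW }
      with hX
    have hT := Tf_zero X f hcls (horth X)
    have happ : (∑ g : G, f g • X.ρ g) ⟨w, hw⟩ = (0 : X.V) := by rw [hT]; rfl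
    have happ2 : (∑ g : G, f g • (X.ρ g) ⟨w, hw⟩ : X.V) = 0 := by
      rw [← happ, LinearMap.sum_apply]
      apply Finset.sum_congr rfl
      intro g _
      rw [LinearMap.smul_apply]
    have hsum : ((∑ g : G, f g • (X.ρ g) ⟨w, hw⟩ : X.V) : MonoidAlgebra ℂ G)
        = ∑ g : G, f g • (MonoidAlgebra.of ℂ G g * w) := by
      rw [Submodule.coe_sum]
      apply Finset.sum_congr rfl
      intro g _
      rw [Submodule.coe_smul]
      rfl
    have h3 := congrArg Subtype.val happ2
    rw [hsum] at h3
    have h3' : ∑ g : G, f g • (MonoidAlgebra.of ℂ G g * w) = 0 := by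
      rw [h3]
      rfl
    rw [hu, Finset.sum_mul,
      Finset.sum_congr rfl (fun g _ => smul_mul_assoc (f g) (MonoidAlgebra.of ℂ G g) w)]
    exact h3'
  have hone : (1 : MonoidAlgebra ℂ G) ∈
      sSup {m : Submodule (MonoidAlgebra ℂ G) (MonoidAlgebra ℂ G) |
        IsSimpleModule (MonoidAlgebra ℂ G) ↥m} := by
    rw [IsSemisimpleModule.sSup_simples_eq_top]
    trivial
  rw [sSup_eq_iSup'] at hone
  have hu0 : u * 1 = 0 := by
    refine Submodule.iSup_induction _ (motive := fun x => u * x = 0) hone ?_ (mul_zero u) ?_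
    · rintro ⟨W, hW⟩ x hx
      exact hsimple W hW x hx
    · intro x y hx hy
      rw [mul_add, hx, hy, add_zero]
  rw [mul_one] at hu0
  funext g₀
  have := congrArg (fun v : MonoidAlgebra ℂ G => v.coeff g₀) hu0
  simp only [hu] at this
  rw [show (∑ g : G, f g • MonoidAlgebra.of ℂ G g).coeff g₀
      = ∑ g : G, (f g • MonoidAlgebra.of ℂ G g).coeff g₀ by
        rw [MonoidAlgebra.coeff_sum, Finset.sum_apply']] at this
  have hterm : ∀ g : G, (f g • MonoidAlgebra.of ℂ G g).coeff g₀ = if g = g₀ then f g else 0 := by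
    intro g
    rw [MonoidAlgebra.coeff_smul_apply]
    simp [MonoidAlgebra.coeff_single_apply, Finsupp.single_apply]
  rw [Finset.sum_congr rfl (fun g _ => hterm g), Finset.sum_ite_eq' Finset.univ g₀ f] at this
  simpa using this

end completeness

section secondorth

variable [Fintype G]

noncomputable instance : Fintype (Qcl G) := Fintype.ofFinite _

/-- Number of elements conjugating `a` to `b`. -/
noncomputable def conjCount (a b : G) : ℕ :=
  (Finset.univ.filter (fun g : G => g * a * g⁻¹ = b)).card

lemma conjCount_conj (a y x : G) : conjCount a (y * x * y⁻¹) = conjCount a x := by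
  unfold conjCount
  apply Finset.card_bij' (fun g _ => y⁻¹ * g) (fun g _ => y * g)
  · intro g hg
    rw [Finset.mem_filter] at hg ⊢
    refine ⟨Finset.mem_univ _, ?_⟩
    have := hg.2
    rw [show (y⁻¹ * g) * a * (y⁻¹ * g)⁻¹ = y⁻¹ * (g * a * g⁻¹) * y by group, this]
    group
  · intro g hg
    rw [Finset.mem_filter] at hg ⊢
    refine ⟨Finset.mem_univ _, ?_⟩
    have := hg.2
    rw [show (y * g) * a * (y * g)⁻¹ = y * (g * a * g⁻¹) * y⁻¹ by group, this]
  · intro g _; group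
  · intro g _; group

lemma sum_conjCount_mul (a : G) (ψ : G → ℂ) (hψ : ∀ h g : G, ψ (h * g * h⁻¹) = ψ g) :
    ∑ x : G, (conjCount a x : ℂ) * ψ x = (Fintype.card G : ℂ) * ψ a := by
  have step : ∀ x : G, (conjCount a x : ℂ) * ψ x =
      ∑ g : G, if g * a * g⁻¹ = x then ψ x else 0 := by
    intro x
    rw [← Finset.sum_filter, Finset.sum_const, conjCount, nsmul_eq_mul]
  rw [Finset.sum_congr rfl (fun x _ => step x), Finset.sum_comm]
  rw [Finset.sum_congr rfl (fun g _ => Finset.sum_ite_eq Finset.univ (g * a * g⁻¹) ψ)]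
  simp only [Finset.mem_univ, if_true]
  rw [Finset.sum_congr rfl (fun g _ => hψ g a), Finset.sum_const]
  simp [mul_comm]

lemma second_orth (a b : G) :
    (conjCount a b : ℂ) = ∑ c : Qcl G, cchar c a * cchar c b⁻¹ := by
  set h : G → ℂ := fun x => (conjCount a x : ℂ) - ∑ c : Qcl G, cchar c a * cchar c x⁻¹ with hh
  have hcls : ∀ y x : G, h (y * x * y⁻¹) = h x := by
    intro y x
    simp only [hh]
    rw [conjCount_conj, show (y * x * y⁻¹)⁻¹ = y * x⁻¹ * y⁻¹ by group]
    congr 1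
    apply Finset.sum_congr rfl
    intro c _
    rw [cchar_conjCl]
  have horth : ∀ X : IrrFRep G, ∑ g : G, h g * irrChar X g = 0 := by
    intro X
    simp only [hh, sub_mul]
    rw [Finset.sum_sub_distrib]
    have h1 : ∑ x : G, (conjCount a x : ℂ) * irrChar X x =
        (Fintype.card G : ℂ) * irrChar X a :=
      sum_conjCount_mul a (irrChar X) (fun y g => irrChar_conjCl X y g)
    have h2 : ∑ x : G, (∑ c : Qcl G, cchar c a * cchar c x⁻¹) * irrChar X x =
        (Fintype.card G : ℂ) * irrChar X a := by
      have swap : ∑ x : G, (∑ c : Qcl G, cchar c a * cchar c x⁻¹) * irrChar X x =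
          ∑ c : Qcl G, cchar c a * ∑ x : G, cchar c x⁻¹ * cchar (Quot.mk _ X) x := by
        simp only [Finset.sum_mul]
        rw [Finset.sum_comm]
        apply Finset.sum_congr rfl
        intro c _
        rw [Finset.mul_sum]
        apply Finset.sum_congr rfl
        intro x _
        rw [show cchar (Quot.mk _ X) x = irrChar X x from rfl]
        ring
      rw [swap]
      rw [Finset.sum_congr rfl (fun c _ => by rw [cchar_pair (Quot.mk _ X) c])]
      simp only [mul_ite, mul_one, mul_zero]
      rw [Finset.sum_ite_eq Finset.univ (Quot.mk _ X)
        (fun c => cchar c a * (Fintype.card G : ℂ))]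
      rw [if_pos (Finset.mem_univ _)]
      rw [show cchar (Quot.mk _ X) a = irrChar X a from rfl]
      ring
    rw [h1, h2, sub_self]
  have hzero := class_fn_orth h hcls horth
  have := congrFun hzero b
  simp only [hh, Pi.zero_apply] at this
  exact sub_eq_zero.mp this

end secondorth

section burnside

/-- Type synonym for `G` with the twisted conjugation action. -/
def TwG (φ : G →* G) : Type := G

def toTwG (φ : G →* G) : G ≃ TwG φ := Equiv.refl G

instance (φ : G →* G) : SMul G (TwG φ) :=
  ⟨fun x g => toTwG φ (x * (toTwG φ).symm g * (φ x)⁻¹)⟩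

lemma twg_smul_def (φ : G →* G) (x : G) (g : TwG φ) :
    x • g = toTwG φ (x * (toTwG φ).symm g * (φ x)⁻¹) := rfl

instance (φ : G →* G) : MulAction G (TwG φ) where
  one_smul g := by
    rw [twg_smul_def]
    simp
  mul_smul x y g := by
    rw [twg_smul_def, twg_smul_def, twg_smul_def]
    apply congrArg
    rw [Equiv.symm_apply_apply, map_mul, mul_inv_rev]
    group

noncomputable instance (φ : G →* G) [Fintype G] : Fintype (TwG φ) :=
  Fintype.ofEquiv G (toTwG φ)

noncomputable def twisted_quot_equiv (φ : G →* G) :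
    Quot (twistedConj φ) ≃ MulAction.orbitRel.Quotient G (TwG φ) := by
  refine Quot.congr (toTwG φ) (fun a b => ?_)
  constructor
  · rintro ⟨x, hx⟩
    show toTwG φ a ∈ MulAction.orbit G (toTwG φ b)
    refine ⟨x, ?_⟩
    show x • toTwG φ b = toTwG φ a
    rw [twg_smul_def]
    apply congrArg
    rw [Equiv.symm_apply_apply]
    exact hx.symm
  · intro h
    obtain ⟨x, hx⟩ := h
    have hx : x • toTwG φ b = toTwG φ a := hx
    rw [twg_smul_def] at hx
    refine ⟨x, ?_⟩
    have := congrArg (toTwG φ).symm hx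
    rw [Equiv.symm_apply_apply, Equiv.symm_apply_apply] at this
    exact this.symm

variable [Fintype G]

lemma fixedBy_card (φ : G →* G) (x : G) :
    Nat.card (MulAction.fixedBy (TwG φ) x) = conjCount (φ x) x := by
  have e : (MulAction.fixedBy (TwG φ) x) ≃ {g : G // g * (φ x) * g⁻¹ = x} := by
    refine Equiv.subtypeEquiv (toTwG φ).symm (fun g => ?_)
    rw [MulAction.mem_fixedBy, twg_smul_def]
    set g' : G := (toTwG φ).symm g with hg'
    rw [show g = toTwG φ g' from ((toTwG φ).apply_symm_apply g).symm]
    rw [Equiv.apply_eq_iff_eq]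
    constructor
    · intro h
      have h' : x * g' = g' * (φ x) := by
        conv_rhs => rw [← h]
        group
      rw [← h']
      group
    · intro h
      have h' : g' * (φ x) = x * g' := by
        conv_rhs => rw [← h]
        group
      rw [← h']
      group
  rw [Nat.card_congr e, Nat.card_eq_fintype_card, Fintype.card_subtype]
  rfl

lemma burnside_side (φ : G →* G) :
    Nat.card (Quot (twistedConj φ)) * Fintype.card G = ∑ x : G, conjCount (φ x) x := by
  haveI : ∀ a : G, Fintype (MulAction.fixedBy (TwG φ) a) := fun a => Fintype.ofFinite _
  haveI : Fintype (MulAction.orbitRel.Quotient G (TwG φ)) := Fintype.ofFinite _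
  have hb := MulAction.sum_card_fixedBy_eq_card_orbits_mul_card_group G (TwG φ)
  have h1 : Nat.card (Quot (twistedConj φ)) =
      Fintype.card (MulAction.orbitRel.Quotient G (TwG φ)) := by
    rw [← Nat.card_eq_fintype_card]
    exact Nat.card_congr (twisted_quot_equiv φ)
  have h2 : ∀ x : G, Fintype.card (MulAction.fixedBy (TwG φ) x) = conjCount (φ x) x := by
    intro x
    rw [← Nat.card_eq_fintype_card, fixedBy_card]
  rw [h1, ← hb, Finset.sum_congr rfl (fun x _ => h2 x)]

end burnside

section final

/-- The twisted fixedness condition. -/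
def twFixed (φ : G →* G) (X : IrrFRep G) : Prop :=
  ∃ T : X.V ≃ₗ[ℂ] X.V, ∀ (g : G) (v : X.V), T (X.ρ (φ g) v) = X.ρ g (T v)

lemma twFixed_transfer (φ : G →* G) {X Y : IrrFRep G} (h : repEquivRel X Y) :
    twFixed φ X → twFixed φ Y := by
  obtain ⟨S, hS⟩ := h
  rintro ⟨T, hT⟩
  have hsymm : ∀ (g : G) (v : Y.V), S.symm (Y.ρ g v) = X.ρ g (S.symm v) := by
    intro g v
    apply S.injective
    rw [S.apply_symm_apply, hS, S.apply_symm_apply]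
  refine ⟨(S.symm.trans T).trans S, fun g v => ?_⟩
  simp only [LinearEquiv.trans_apply]
  rw [hsymm, hT, hS]

variable [Fintype G]

lemma class_sum (φ : G →* G) (c : Qcl G) :
    ∑ x : G, cchar c (φ x) * cchar c x⁻¹ =
      (Fintype.card G : ℂ) *
        (if (∃ X : IrrFRep G, Quot.mk _ X = c ∧ twFixed φ X) then 1 else 0) := by
  induction c using Quot.ind with
  | _ X =>
  have h := char_twisted (G := G) φ X
  have hre : ∑ x : G, cchar (Quot.mk _ X) (φ x) * cchar (Quot.mk _ X) x⁻¹ =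
      ∑ g : G, irrChar X (φ g⁻¹) * irrChar X g := by
    apply Fintype.sum_bijective (fun g : G => g⁻¹) (Equiv.inv G).bijective
    intro x
    show cchar (Quot.mk _ X) (φ x) * cchar (Quot.mk _ X) x⁻¹
      = irrChar X (φ x⁻¹⁻¹) * irrChar X x⁻¹
    rw [inv_inv]
    rfl
  rw [hre, h]
  congr 1
  have hiff : (∃ X' : IrrFRep G, Quot.mk _ X' = Quot.mk (repEquivRel (G := G)) X ∧
      twFixed φ X') ↔ twFixed φ X := by
    constructor
    · rintro ⟨X', he, hT⟩
      exact twFixed_transfer φ (quot_mk_eq_iff.mp he) hT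
    · intro hT
      exact ⟨X, rfl, hT⟩
  rw [show (∃ T : X.V ≃ₗ[ℂ] X.V, ∀ (g : G) (v : X.V), T (X.ρ (φ g) v) = X.ρ g (T v)) =
    twFixed φ X from rfl]
  rw [show (∃ X' : IrrFRep G, Quot.mk _ X' = Quot.mk (repEquivRel (G := G)) X ∧
      twFixed φ X') = twFixed φ X from propext hiff]

end final

end TBF

/-- Twisted Burnside–Frobenius theorem for a finite group: the Reidemeister
number of `φ` equals the number of equivalence classes of irreducible complex
representations `ρ` with `ρ ∘ φ` equivalent to `ρ`. -/
theorem stmt10 {G : Type} [Group G] [Finite G] (φ : G →* G) :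
    Nat.card (Quot (twistedConj φ)) =
      Nat.card {c : Quot (repEquivRel (G := G)) //
        ∃ X : IrrFRep G, Quot.mk _ X = c ∧
          ∃ T : X.V ≃ₗ[ℂ] X.V, ∀ (g : G) (v : X.V), T (X.ρ (φ g) v) = X.ρ g (T v)} := by
  haveI : Fintype G := Fintype.ofFinite G
  classical
  set P : TBF.Qcl G → Prop :=
    (fun c => ∃ X : IrrFRep G, Quot.mk _ X = c ∧ TBF.twFixed φ X) with hP
  have hcast : Nat.card {c : Quot (repEquivRel (G := G)) //
      ∃ X : IrrFRep G, Quot.mk _ X = c ∧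
        ∃ T : X.V ≃ₗ[ℂ] X.V, ∀ (g : G) (v : X.V), T (X.ρ (φ g) v) = X.ρ g (T v)} =
      Nat.card {c : TBF.Qcl G // P c} := rfl
  rw [hcast]
  have h1 := congrArg (fun m : ℕ => (m : ℂ)) (TBF.burnside_side φ)
  push_cast at h1
  have h2 : ∑ x : G, (TBF.conjCount (φ x) x : ℂ) =
      ∑ c : TBF.Qcl G, ∑ x : G, TBF.cchar c (φ x) * TBF.cchar c x⁻¹ := by
    rw [Finset.sum_congr rfl (fun x _ => TBF.second_orth (φ x) x), Finset.sum_comm]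
  have h3 : ∑ c : TBF.Qcl G, ∑ x : G, TBF.cchar c (φ x) * TBF.cchar c x⁻¹ =
      (Fintype.card G : ℂ) * ∑ c : TBF.Qcl G, (if P c then 1 else 0) := by
    rw [Finset.sum_congr rfl (fun c _ => TBF.class_sum φ c), ← Finset.mul_sum]
  have h4 : ∑ c : TBF.Qcl G, (if P c then (1 : ℂ) else 0) =
      ((Finset.univ.filter P).card : ℂ) := Finset.sum_boole P Finset.univ
  have h5 : Nat.card {c : TBF.Qcl G // P c} = (Finset.univ.filter P).card := by
    rw [Nat.card_eq_fintype_card, Fintype.card_subtype]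
  have hfinal : (Nat.card (Quot (twistedConj φ)) : ℂ) * (Fintype.card G : ℂ) =
      (Nat.card {c : TBF.Qcl G // P c} : ℂ) * (Fintype.card G : ℂ) := by
    rw [h1, h2, h3, h4, h5, mul_comm]
  have hne : (Fintype.card G : ℂ) ≠ 0 := Nat.cast_ne_zero.mpr Fintype.card_ne_zero
  have := mul_right_cancel₀ hne hfinal
  exact_mod_cast this
end

section
/- Let φ: G → G be an endomorphism with R(φ) < ∞ such that the set of right translates {C·g : C a Reidemeister class of φ, g ∈ G} is finite. Then there exists a normal subgroup H of finite index in G such that every Reidemeister class of φ is a union of cosets of H. -/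
section aux

variable {G : Type*} [Group G] (φ : G →* G)

lemma tc_refl (a : G) : twistedConj φ a a := ⟨1, by simp⟩

lemma tc_symm {a b : G} (h : twistedConj φ a b) : twistedConj φ b a := by
  obtain ⟨x, hx⟩ := h
  exact ⟨x⁻¹, by rw [hx]; simp [map_inv]; group⟩

lemma tc_trans {a b c : G} (h1 : twistedConj φ a b) (h2 : twistedConj φ b c) :
    twistedConj φ a c := by
  obtain ⟨x, hx⟩ := h1
  obtain ⟨y, hy⟩ := h2
  exact ⟨x * y, by rw [hx, hy]; simp [map_mul]; group⟩

def tcSetoid : Setoid G :=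
  ⟨twistedConj φ, ⟨tc_refl φ, tc_symm φ, tc_trans φ⟩⟩

/-- The subgroup of elements whose right translation preserves every
Reidemeister class. -/
def tcStab : Subgroup G where
  carrier := {h | ∀ a : G, twistedConj φ (a * h) a}
  one_mem' := fun a => by simpa using tc_refl φ a
  mul_mem' := by
    intro h1 h2 hh1 hh2 a
    have t1 : twistedConj φ (a * h1 * h2) (a * h1) := hh2 (a * h1)
    have t2 : twistedConj φ (a * h1) a := hh1 a
    have := tc_trans φ t1 t2
    simpa [mul_assoc] using this
  inv_mem' := by
    intro h hh a
    have t : twistedConj φ (a * h⁻¹ * h) (a * h⁻¹) := hh (a * h⁻¹)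
    have t' : twistedConj φ a (a * h⁻¹) := by simpa [mul_assoc] using t
    exact tc_symm φ t'

lemma tcStab_class_eq {h : G} (hh : h ∈ tcStab φ) (c : G) :
    (fun x => x * h) '' {a | twistedConj φ a c} = {a | twistedConj φ a c} := by
  ext b
  constructor
  · rintro ⟨a, ha, rfl⟩
    exact tc_trans φ (hh a) ha
  · intro hb
    refine ⟨b * h⁻¹, ?_, by simp⟩
    have : twistedConj φ (b * h⁻¹) b := (tcStab φ).inv_mem hh b
    exact tc_trans φ this hb

end aux

/-- If `R(φ) < ∞` and the set of right translates of the Reidemeister classes of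
`φ` is finite, then there is a finite-index normal subgroup `H` such that every
Reidemeister class of `φ` is a union of `H`-cosets. -/
theorem stmt13 {G : Type*} [Group G] (φ : G →* G)
    (hR : Finite (Quot (twistedConj φ)))
    (hsh : {s : Set G | ∃ c g : G, s = (fun x => x * g) '' {a | twistedConj φ a c}}.Finite) :
    ∃ H : Subgroup G, H.Normal ∧ H.FiniteIndex ∧
      ∀ a : G, ∀ h ∈ H, twistedConj φ (a * h) a := by
  classical
  set K := tcStab φ with hK
  -- the quotient by twisted conjugacy, as a `Quotient` of a setoid
  let Q := Quotient (tcSetoid φ)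
  have hQfin : Finite Q := hR
  have hSfin : Finite ↥hsh.toFinset := inferInstance
  -- the map recording all translates of classes
  let F : G → (Q → Set G) := fun g q =>
    (fun x => x * g⁻¹) '' {a | twistedConj φ a (Quotient.out q)}
  have hFmem : ∀ g q, F g q ∈ hsh.toFinset := by
    intro g q
    rw [Set.Finite.mem_toFinset]
    exact ⟨Quotient.out q, g⁻¹, rfl⟩
  let F' : G → (Q → ↥hsh.toFinset) := fun g q => ⟨F g q, hFmem g q⟩
  -- F' descends to G ⧸ K
  have hdesc : ∀ g g' : G, g⁻¹ * g' ∈ K → F' g = F' g' := by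
    intro g g' hmem
    have hinv : (g⁻¹ * g')⁻¹ ∈ K := K.inv_mem hmem
    funext q
    apply Subtype.ext
    show F g q = F g' q
    have : (fun x => x * (g⁻¹ * g')⁻¹) '' {a | twistedConj φ a (Quotient.out q)}
        = {a | twistedConj φ a (Quotient.out q)} := tcStab_class_eq φ hinv _
    calc F g q = (fun x => x * g⁻¹) '' ((fun x => x * (g⁻¹ * g')⁻¹) ''
          {a | twistedConj φ a (Quotient.out q)}) := by rw [this]
    _ = (fun x => x * g'⁻¹) '' {a | twistedConj φ a (Quotient.out q)} := by
          rw [← Set.image_comp]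
          funext x
          simp [mul_assoc]
    _ = F g' q := rfl
  let Fbar : G ⧸ K → (Q → ↥hsh.toFinset) :=
    Quotient.lift F' fun g g' h => hdesc g g' ((QuotientGroup.leftRel_apply).mp h)
  have hinj : Function.Injective Fbar := by
    intro x y
    induction x using Quotient.ind
    induction y using Quotient.ind
    rename_i g g'
    intro hxy
    have hFF : ∀ q : Q, F g q = F g' q := by
      intro q
      have := congrFun hxy q
      exact congrArg Subtype.val this
    refine Quotient.sound ((QuotientGroup.leftRel_apply).mpr ?_)
    -- show g⁻¹ * g' ∈ K
    intro a
    -- use the class of a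
    have ha : twistedConj φ a (Quotient.out (Quotient.mk (tcSetoid φ) a)) :=
      tc_symm φ (Quotient.mk_out (s := tcSetoid φ) a)
    set q : Q := Quotient.mk (tcSetoid φ) a with hq
    have h1 : a * g⁻¹ ∈ F g q := ⟨a, ha, rfl⟩
    rw [hFF q] at h1
    obtain ⟨b, hb, hba⟩ := h1
    -- hba : b * g'⁻¹ = a * g⁻¹
    have hba' : b * g'⁻¹ = a * g⁻¹ := hba
    have hbval : b = a * g⁻¹ * g' := by
      calc b = b * g'⁻¹ * g' := by group
      _ = a * g⁻¹ * g' := by rw [hba']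
    have hbc : twistedConj φ b (Quotient.out q) := hb
    have : twistedConj φ (a * (g⁻¹ * g')) a := by
      rw [← mul_assoc, ← hbval]
      exact tc_trans φ hbc (tc_symm φ ha)
    exact this
  have hfinQuot : Finite (G ⧸ K) := Finite.of_injective Fbar hinj
  have hKfi : K.FiniteIndex := Subgroup.finiteIndex_of_finite_quotient (H := K)
  refine ⟨K.normalCore, Subgroup.normalCore_normal K, Subgroup.finiteIndex_normalCore K, ?_⟩
  intro a h hh
  exact Subgroup.normalCore_le K hh a
end

section
/- Let G be a group with finitely many inner automorphisms (i.e., G/Z(G) finite) and φ: G → G an endomorphism with finite Reidemeister number. Then there exists a finite group F and an epimorphism p: G → F such that distinct Reidemeister classes of φ map to disjoint subsets of F. -/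
section aux

variable {G : Type*} [Group G] (φ : G →* G)

theorem twistedConj_equivalence : Equivalence (twistedConj φ) := by
  constructor
  · intro a; exact ⟨1, by simp⟩
  · rintro a b ⟨x, rfl⟩
    exact ⟨x⁻¹, by simp [map_inv, mul_assoc]⟩
  · rintro a b c ⟨x, rfl⟩ ⟨y, rfl⟩
    exact ⟨x * y, by simp [mul_assoc]⟩

theorem twistedConj_quot_eq {a b : G} :
    Quot.mk (twistedConj φ) a = Quot.mk (twistedConj φ) b ↔ twistedConj φ a b := by
  rw [Quot.eq, (twistedConj_equivalence φ).eqvGen_iff]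

/-- Right translation by a central element preserves twisted conjugacy. -/
theorem twistedConj_mul_central {a b c : G} (hc : c ∈ Subgroup.center G)
    (h : twistedConj φ a b) : twistedConj φ (a * c) (b * c) := by
  obtain ⟨x, rfl⟩ := h
  refine ⟨x, ?_⟩
  have hcm : (φ x)⁻¹ * c = c * (φ x)⁻¹ := Subgroup.mem_center_iff.mp hc (φ x)⁻¹
  simp only [mul_assoc]
  rw [hcm]

/-- The invariant of `a`: for every class `z` in `G/Z(G)`, the twisted
conjugacy class of `a * (z.out)⁻¹`. -/
noncomputable def tcInv (a : G) : (G ⧸ Subgroup.center G) → Quot (twistedConj φ) :=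
  fun z => Quot.mk (twistedConj φ) (a * (Quotient.out z)⁻¹)

theorem tcInv_right_invariant {a b : G} (h : tcInv φ a = tcInv φ b) (g : G) :
    tcInv φ (a * g) = tcInv φ (b * g) := by
  funext z
  set w : G := Quotient.out z * g⁻¹ with hw
  set z' : G ⧸ Subgroup.center G := QuotientGroup.mk w with hz'
  have hc : w⁻¹ * Quotient.out z' ∈ Subgroup.center G := by
    rw [← QuotientGroup.eq]
    exact (Quotient.out_eq z').symm
  set c : G := w⁻¹ * Quotient.out z' with hcdef
  have hkey : ∀ u : G, u * g * (Quotient.out z)⁻¹ = u * (Quotient.out z')⁻¹ * c := by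
    intro u
    have hw1 : (Quotient.out z)⁻¹ = g⁻¹ * w⁻¹ := by rw [hw]; group
    have hw2 : w⁻¹ = (Quotient.out z')⁻¹ * c := by
      have h2 : w⁻¹ = c * (Quotient.out z')⁻¹ := by rw [hcdef]; group
      rw [h2, Subgroup.mem_center_iff.mp hc]
    rw [hw1, hw2]
    group
  have hz'eq : Quot.mk (twistedConj φ) (a * (Quotient.out z')⁻¹)
      = Quot.mk (twistedConj φ) (b * (Quotient.out z')⁻¹) := congrFun h z'
  rw [twistedConj_quot_eq] at hz'eq
  have := twistedConj_mul_central φ hc hz'eq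
  show Quot.mk (twistedConj φ) (a * g * (Quotient.out z)⁻¹)
      = Quot.mk (twistedConj φ) (b * g * (Quotient.out z)⁻¹)
  rw [hkey a, hkey b, twistedConj_quot_eq]
  exact this

theorem tcInv_eq_imp {a b : G} (h : tcInv φ a = tcInv φ b) : twistedConj φ a b := by
  set z : G ⧸ Subgroup.center G := 1 with hz
  have hd : Quotient.out z ∈ Subgroup.center G := by
    rw [← QuotientGroup.eq_one_iff (N := Subgroup.center G)]
    exact Quotient.out_eq z
  have h1 : Quot.mk (twistedConj φ) (a * (Quotient.out z)⁻¹)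
      = Quot.mk (twistedConj φ) (b * (Quotient.out z)⁻¹) := congrFun h z
  rw [twistedConj_quot_eq] at h1
  have := twistedConj_mul_central φ hd h1
  simpa [mul_assoc] using this

end aux

/-- If `G` has finitely many inner automorphisms (`G/Z(G)` finite) and
`R(φ) < ∞`, then there is an epimorphism onto a finite group under which
distinct Reidemeister classes of `φ` have disjoint images. -/
theorem stmt14 {G : Type*} [Group G] (φ : G →* G)
    (hinn : Finite (G ⧸ Subgroup.center G))
    (hR : Finite (Quot (twistedConj φ))) :
    ∃ (F : Type) (_ : Group F), Finite F ∧
      ∃ p : G →* F, Function.Surjective p ∧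
        ∀ a b : G, p a = p b → twistedConj φ a b := by
  classical
  -- the subgroup of elements with the same invariant as 1
  set N : Subgroup G :=
    { carrier := {g | tcInv φ g = tcInv φ 1}
      one_mem' := rfl
      mul_mem' := by
        intro g h hg hh
        have hh' : tcInv φ h = tcInv φ 1 := hh
        have := tcInv_right_invariant φ hg h
        simp only [one_mul] at this
        simpa [hh'] using this
      inv_mem' := by
        intro g hg
        have hg' : tcInv φ g = tcInv φ 1 := hg
        have := tcInv_right_invariant φ hg' g⁻¹
        simpa using this.symm } with hN
  have hmemN : ∀ g : G, g ∈ N ↔ tcInv φ g = tcInv φ 1 := fun g => Iff.rfl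
  -- N has finite index
  have hNfin : Finite (G ⧸ N) := by
    have : Function.Injective
        (fun q : G ⧸ N => Quotient.liftOn' q (fun a => tcInv φ a⁻¹) (by
          intro a b hab
          have hab' : a⁻¹ * b ∈ N := QuotientGroup.leftRel_apply.mp hab
          have h1 : tcInv φ (a⁻¹ * b) = tcInv φ 1 := hab'
          have := tcInv_right_invariant φ h1 b⁻¹
          simpa [mul_assoc] using this)) := by
      intro q₁ q₂
      induction q₁ using Quotient.inductionOn'
      induction q₂ using Quotient.inductionOn'
      rename_i a b
      intro h
      simp only [Quotient.liftOn'_mk''] at h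
      apply Quotient.sound'
      rw [QuotientGroup.leftRel_apply]
      rw [hmemN]
      have := tcInv_right_invariant φ h b
      simpa [mul_assoc] using this
    exact Finite.of_injective _ this
  haveI : N.FiniteIndex := Subgroup.finiteIndex_of_finite_quotient
  set M : Subgroup G := N.normalCore with hM
  haveI hMnorm : M.Normal := Subgroup.normalCore_normal N
  haveI : M.FiniteIndex := Subgroup.finiteIndex_normalCore N
  haveI : Finite (G ⧸ M) := Subgroup.finite_quotient_of_finiteIndex
  obtain ⟨n, ⟨e⟩⟩ := Finite.exists_equiv_fin (G ⧸ M)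
  letI : Group (Fin n) := Equiv.group e.symm
  refine ⟨Fin n, inferInstance, inferInstance,
    { toFun := fun g => e (QuotientGroup.mk g)
      map_one' := ?_
      map_mul' := ?_ }, ?_, ?_⟩
  · show e (QuotientGroup.mk 1) = (1 : Fin n)
    show e (QuotientGroup.mk 1) = e (1 : G ⧸ M)
    norm_num
  · intro g h
    show e (QuotientGroup.mk (g * h))
      = e (e.symm (e (QuotientGroup.mk g)) * e.symm (e (QuotientGroup.mk h)))
    simp
  · intro x
    obtain ⟨g, hg⟩ := QuotientGroup.mk_surjective (e.symm x)
    exact ⟨g, by simp [hg]⟩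
  · intro a b hab
    have h1 : (QuotientGroup.mk a : G ⧸ M) = QuotientGroup.mk b := e.injective hab
    have h2 : a⁻¹ * b ∈ M := QuotientGroup.eq.mp h1
    have h3 : b * a⁻¹ ∈ M := by
      have := (Subgroup.Normal.mem_comm_iff hMnorm).mp h2
      simpa using this
    have h4 : tcInv φ (b * a⁻¹) = tcInv φ 1 := Subgroup.normalCore_le N h3
    have h5 := tcInv_right_invariant φ h4 a
    have h6 : tcInv φ b = tcInv φ a := by simpa [mul_assoc] using h5
    exact ((twistedConj_equivalence φ).symm (tcInv_eq_imp φ h6))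
end

section
/- Let φ be an endomorphism of a finitely generated abelian group A with finite Reidemeister number. Then the subgroup of fixed points of φ is finite. -/
/-- A finite `ℤ`-module has rank zero (any module instance). -/
lemma rank_int_eq_zero_of_finite (N : Type*) [AddCommGroup N] [Module ℤ N] [Finite N] :
    Module.rank ℤ N = 0 := by
  rw [rank_eq_zero_iff]
  intro x
  refine ⟨(addOrderOf x : ℤ), ?_, ?_⟩
  · exact_mod_cast (addOrderOf_pos x).ne'
  · rw [Nat.cast_smul_eq_nsmul]
    exact addOrderOf_nsmul_eq_zero x

/-- A finitely generated `ℤ`-module endomorphism with finite cokernel has finite kernel. -/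
lemma key_finite_ker {M : Type*} [AddCommGroup M] [Module ℤ M] [Module.Finite ℤ M]
    (f : M →ₗ[ℤ] M) (h : Finite (M ⧸ LinearMap.range f)) :
    Finite (LinearMap.ker f) := by
  have h1 := Submodule.rank_quotient_add_rank (LinearMap.range f)
  have h2 := LinearMap.rank_range_add_rank_ker f
  have hM : Module.rank ℤ M < Cardinal.aleph0 := Module.rank_lt_aleph0 ℤ M
  rw [rank_int_eq_zero_of_finite, zero_add] at h1
  rw [h1] at h2
  -- now h2 : rank M + rank (ker f) = rank M
  have hk := lt_of_le_of_lt (le_add_self.trans h2.le) hM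
  have h3 := congrArg Cardinal.toNat h2
  rw [Cardinal.toNat_add hM hk] at h3
  have h0 := Nat.add_left_cancel (h3.trans (Nat.add_zero _).symm)
  have hker := (Cardinal.toNat_eq_zero.mp h0).resolve_right (not_le.mpr hk)
  have hT := (@rank_eq_zero_iff_isTorsion ℤ ↥(LinearMap.ker f) _ _ _
    (LinearMap.ker f).module).mp hker
  haveI : IsNoetherian ℤ M := isNoetherian_of_isNoetherianRing_of_finite ℤ M
  exact @Module.finite_of_fg_torsion ↥(LinearMap.ker f) _ (LinearMap.ker f).module
    (Module.Finite.iff_fg.mpr (IsNoetherian.noetherian _)) hT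

/-- An endomorphism of a finitely generated abelian group with finite
Reidemeister number has a finite set of fixed points. -/
theorem stmt16 {A : Type*} [CommGroup A] [Group.FG A] (φ : A →* A)
    (hR : Finite (Quot (twistedConj φ))) :
    {a : A | φ a = a}.Finite := by
  -- the homomorphism a ↦ a / φ a
  let ψ : A →* A :=
    { toFun := fun a => a / φ a
      map_one' := by simp
      map_mul' := fun a b => by simp [div_mul_div_comm] }
  have hψ : ∀ a, ψ a = a / φ a := fun a => rfl
  -- pass to the additive group
  let f : Additive A →ₗ[ℤ] Additive A := (MonoidHom.toAdditive ψ).toIntLinearMap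
  have hf : ∀ a : A, f (Additive.ofMul a) = Additive.ofMul (ψ a) := fun a => rfl
  haveI : Module.Finite ℤ (Additive A) :=
    Module.Finite.iff_addGroup_fg.mpr (AddGroup.fg_iff_mul_fg.mpr ‹Group.FG A›)
  -- the cokernel of f is a quotient of the set of twisted conjugacy classes
  have hcoker : Finite (Additive A ⧸ LinearMap.range f) := by
    have hsound : ∀ a b : A, twistedConj φ a b →
        (Submodule.Quotient.mk (Additive.ofMul a) :
          Additive A ⧸ LinearMap.range f) = Submodule.Quotient.mk (Additive.ofMul b) := by
      rintro a b ⟨x, rfl⟩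
      rw [Submodule.Quotient.eq]
      refine ⟨Additive.ofMul x, ?_⟩
      rw [hf]
      have : ψ x = (x * b * (φ x)⁻¹) / b := by
        rw [div_eq_mul_inv, mul_right_comm, mul_inv_cancel_right, hψ, div_eq_mul_inv]
      rw [this]
      rfl
    refine Finite.of_surjective
      (Quot.lift (fun a => (Submodule.Quotient.mk (Additive.ofMul a) :
        Additive A ⧸ LinearMap.range f)) hsound) ?_
    intro q
    obtain ⟨m, rfl⟩ := Submodule.Quotient.mk_surjective _ q
    exact ⟨Quot.mk _ (Additive.toMul m), rfl⟩
  have hker : Finite (LinearMap.ker f) := key_finite_ker f hcoker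
  -- fixed points inject into the kernel
  have hmem : ∀ a : A, φ a = a → Additive.ofMul a ∈ LinearMap.ker f := by
    intro a ha
    rw [LinearMap.mem_ker, hf, hψ, ha, div_self']
    rfl
  have : Finite {a : A | φ a = a} := by
    refine Finite.of_injective
      (fun p : {a : A | φ a = a} => (⟨Additive.ofMul p.1, hmem p.1 p.2⟩ : LinearMap.ker f)) ?_
    rintro ⟨a, ha⟩ ⟨b, hb⟩ hab
    simpa using congrArg (fun z : LinearMap.ker f => Additive.toMul z.1) hab
  exact Set.toFinite _
end

section
/- Let φ: G → G be an endomorphism, H a normal φ-invariant subgroup, and suppose the set of fixed points of the induced endomorphism on G/H is finite of cardinality c. Then R(φ|_H) ≤ R(φ)·c. -/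
namespace Stmt17Aux

variable {G : Type*} [Group G]

lemma tc_of_eqvGen (φ : G →* G) {a b : G}
    (h : Relation.EqvGen (twistedConj φ) a b) : twistedConj φ a b := by
  induction h with
  | rel _ _ h => exact h
  | refl a => exact ⟨1, by simp⟩
  | symm a b _ ih =>
      obtain ⟨x, rfl⟩ := ih
      refine ⟨x⁻¹, ?_⟩
      rw [map_inv]; group
  | trans a b c _ _ ih1 ih2 =>
      obtain ⟨x, hx⟩ := ih1
      obtain ⟨y, hy⟩ := ih2
      refine ⟨x * y, ?_⟩
      rw [hx, hy, map_mul]; group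

variable (φ : G →* G) (H : Subgroup G) (ψ : H →* H)

/-- canonical representative of the `twistedConj φ` class of `q.out`. -/
noncomputable def base (q : Quot (twistedConj ψ)) : G :=
  (Quot.mk (twistedConj φ) ((q.out : H) : G)).out

lemma exists_x (q : Quot (twistedConj ψ)) :
    ∃ x : G, ((q.out : H) : G) = x * base φ H ψ q * (φ x)⁻¹ := by
  have h : Quot.mk (twistedConj φ) (base φ H ψ q)
      = Quot.mk (twistedConj φ) ((q.out : H) : G) := Quot.out_eq _
  exact tc_of_eqvGen φ ((Quot.eq.mp h).symm)

noncomputable def xq (q : Quot (twistedConj ψ)) : G :=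
  (exists_x φ H ψ q).choose

lemma xq_spec (q : Quot (twistedConj ψ)) :
    ((q.out : H) : G) = xq φ H ψ q * base φ H ψ q * (φ (xq φ H ψ q))⁻¹ :=
  (exists_x φ H ψ q).choose_spec

/-- the property that some twisted translate of `g` lies in `H`. -/
def P (g : G) : Prop := ∃ x : G, x * g * (φ x)⁻¹ ∈ H

open Classical in
noncomputable def x0 (g : G) : G :=
  if h : P φ H g then h.choose else 1

lemma P_base (q : Quot (twistedConj ψ)) : P φ H (base φ H ψ q) :=
  ⟨xq φ H ψ q, by rw [← xq_spec]; exact (q.out : H).2⟩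

lemma x0_spec {g : G} (h : P φ H g) :
    x0 φ H g * g * (φ (x0 φ H g))⁻¹ ∈ H := by
  rw [x0, dif_pos h]
  exact h.choose_spec

end Stmt17Aux

open Stmt17Aux in
/-- If the induced endomorphism on `G/H` has finitely many fixed points, `c` of
them, then `R(φ|_H) ≤ R(φ) · c`. -/
theorem stmt17 {G : Type*} [Group G] (φ : G →* G) (H : Subgroup G) [H.Normal]
    (hinv : H ≤ H.comap φ) (ψ : H →* H) (hψ : ∀ h : H, (ψ h : G) = φ h)
    (c : ℕ)
    (hfin : Finite {q : G ⧸ H // QuotientGroup.map H H φ hinv q = q})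
    (hc : Nat.card {q : G ⧸ H // QuotientGroup.map H H φ hinv q = q} = c) :
    Cardinal.mk (Quot (twistedConj ψ)) ≤
      Cardinal.mk (Quot (twistedConj φ)) * (c : Cardinal) := by
  classical
  set Fix := {q : G ⧸ H // QuotientGroup.map H H φ hinv q = q} with hFix
  -- the fixed point proof for the second coordinate
  have fixpf : ∀ q : Quot (twistedConj ψ),
      QuotientGroup.map H H φ hinv
        (QuotientGroup.mk (x0 φ H (base φ H ψ q) * (xq φ H ψ q)⁻¹))
        = QuotientGroup.mk (x0 φ H (base φ H ψ q) * (xq φ H ψ q)⁻¹) := by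
    intro q
    set x := xq φ H ψ q with hx
    set x₀ := x0 φ H (base φ H ψ q) with hx0
    set b := base φ H ψ q with hb
    have hk : x * b * (φ x)⁻¹ ∈ H := by
      rw [← xq_spec]; exact (q.out : H).2
    have hk₀ : x₀ * b * (φ x₀)⁻¹ ∈ H := x0_spec φ H (P_base φ H ψ q)
    rw [QuotientGroup.map_mk, QuotientGroup.eq]
    have key : (φ (x₀ * x⁻¹))⁻¹ * (x₀ * x⁻¹)
        = (x * b * (φ x)⁻¹)⁻¹
          * ((x * x₀⁻¹) * (x₀ * b * (φ x₀)⁻¹) * (x * x₀⁻¹)⁻¹) := by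
      rw [map_mul, map_inv]; group
    rw [key]
    exact H.mul_mem (H.inv_mem hk) (Subgroup.Normal.conj_mem ‹H.Normal› _ hk₀ _)
  -- the injection
  set f : Quot (twistedConj ψ) → Quot (twistedConj φ) × Fix :=
    fun q => (Quot.mk (twistedConj φ) ((q.out : H) : G),
      ⟨QuotientGroup.mk (x0 φ H (base φ H ψ q) * (xq φ H ψ q)⁻¹), fixpf q⟩) with hf
  have hinj : Function.Injective f := by
    intro q₁ q₂ h
    rw [hf, Prod.mk.injEq, Subtype.mk.injEq] at h
    obtain ⟨h1, h2⟩ := h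
    have hbase : base φ H ψ q₁ = base φ H ψ q₂ := by
      unfold base; rw [h1]
    rw [hbase] at h2
    set x₁ := xq φ H ψ q₁ with hx1
    set x₂ := xq φ H ψ q₂ with hx2
    set x₀ := x0 φ H (base φ H ψ q₂) with hx0
    set b := base φ H ψ q₂ with hb
    -- from h2 : mk (x₀ * x₁⁻¹) = mk (x₀ * x₂⁻¹) get x₂ * x₁⁻¹ ∈ H
    rw [QuotientGroup.eq] at h2
    have hy : x₂ * x₁⁻¹ ∈ H := by
      have : (x₀ * x₁⁻¹)⁻¹ * (x₀ * x₂⁻¹) = (x₂ * x₁⁻¹)⁻¹ := by group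
      rw [this] at h2
      exact (H.inv_mem_iff).mp h2
    -- show the two class representatives are ψ-twisted conjugate
    have hs1 : ((q₁.out : H) : G) = x₁ * b * (φ x₁)⁻¹ := by
      rw [hx1, ← hbase]; exact xq_spec φ H ψ q₁
    have hs2 : ((q₂.out : H) : G) = x₂ * b * (φ x₂)⁻¹ := xq_spec φ H ψ q₂
    have htc : twistedConj ψ q₂.out q₁.out := by
      refine ⟨⟨x₂ * x₁⁻¹, hy⟩, ?_⟩
      apply Subtype.ext
      push_cast
      rw [hψ, hs1, hs2, map_mul, map_inv]
      group
    have := Quot.sound htc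
    rw [Quot.out_eq, Quot.out_eq] at this
    exact this.symm
  -- conclude by cardinal arithmetic
  have h1 : Cardinal.mk (Quot (twistedConj ψ))
      ≤ Cardinal.mk (Quot (twistedConj φ) × Fix) :=
    Cardinal.mk_le_of_injective hinj
  have h2 : Cardinal.mk (Quot (twistedConj φ) × Fix)
      = Cardinal.mk (Quot (twistedConj φ)) * Cardinal.mk Fix := by
    simp [Cardinal.mk_prod]
  have h3 : Cardinal.mk Fix = (c : Cardinal) := by
    rw [← hc]
    have : (Cardinal.mk Fix).toNat = Nat.card Fix := rfl
    rw [← this, Cardinal.cast_toNat_of_lt_aleph0 (Cardinal.lt_aleph0_of_finite Fix)]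
  rw [h2, h3] at h1
  exact h1
end
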